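/- Let E = {a_j : j ∈ ℕ} ⊆ [0,1] where (a_j) is a sequence whose gaps a_j − a_{j+1} form a positive nonincreasing sequence (a sequence with decreasing gaps). Then dim_qA E = 1 if \overline{dim}_B E > 0, and dim_qA E = 0 if \overline{dim}_B E = 0. -/

import Mathlib

open Metric Filter Set
open scoped ENNReal

/-- `N_r(A)`: the least number of closed balls of radius `r` needed to cover `A`. -/
noncomputable def coverNum {X : Type*} [PseudoMetricSpace X] (A : Set X) (r : ℝ) : ℕ :=
  sInf {n : ℕ | ∃ S : Finset X, S.card = n ∧ A ⊆ ⋃ x ∈ S, closedBall x r}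

/-- `N_{r,R}(E) = sup_{x ∈ E} N_r(E ∩ B(x,R))`. -/
noncomputable def coverNumLoc {X : Type*} [PseudoMetricSpace X] (E : Set X) (r R : ℝ) : ℕ :=
  sSup {n : ℕ | ∃ x ∈ E, n = coverNum (E ∩ closedBall x R) r}

/-- Upper box dimension `limsup_{r → 0⁺} log N_r(E) / log (1/r)`. -/
noncomputable def upperBoxDim {X : Type*} [PseudoMetricSpace X] (E : Set X) : ℝ :=
  limsup (fun r : ℝ => Real.log (coverNum E r) / Real.log (1 / r)) (nhdsWithin 0 (Ioi 0))

/-- Lower box dimension `liminf_{r → 0⁺} log N_r(E) / log (1/r)`. -/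
noncomputable def lowerBoxDim {X : Type*} [PseudoMetricSpace X] (E : Set X) : ℝ :=
  liminf (fun r : ℝ => Real.log (coverNum E r) / Real.log (1 / r)) (nhdsWithin 0 (Ioi 0))

/-- `h̄_E(δ)`: the infimum of all `α ≥ 0` such that for some `b, c > 0`,
`N_{r,R}(E) ≤ c (R/r)^α` whenever `0 < r ≤ R^{1+δ} ≤ R ≤ b`. -/
noncomputable def hUpper {X : Type*} [PseudoMetricSpace X] (E : Set X) (δ : ℝ) : ℝ :=
  sInf {α : ℝ | 0 ≤ α ∧ ∃ b c : ℝ, 0 < b ∧ 0 < c ∧ ∀ r R : ℝ,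
    0 < r → r ≤ R ^ (1 + δ) → R ^ (1 + δ) ≤ R → R ≤ b →
    (coverNumLoc E r R : ℝ) ≤ c * (R / r) ^ α}

/-- `h̲_E(δ)`: the supremum of all `α ≥ 0` such that for some `b, c > 0`,
`N_{r,R}(E) ≥ c (R/r)^α` whenever `0 < r ≤ R^{1+δ} ≤ R ≤ b`. -/
noncomputable def hLower {X : Type*} [PseudoMetricSpace X] (E : Set X) (δ : ℝ) : ℝ :=
  sSup {α : ℝ | 0 ≤ α ∧ ∃ b c : ℝ, 0 < b ∧ 0 < c ∧ ∀ r R : ℝ,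
    0 < r → r ≤ R ^ (1 + δ) → R ^ (1 + δ) ≤ R → R ≤ b →
    c * (R / r) ^ α ≤ (coverNumLoc E r R : ℝ)}

/-- The quasi-Assouad dimension `dim_qA E = lim_{δ → 0⁺} h̄_E(δ)`; since `h̄_E` is
nonincreasing this limit equals the supremum over `δ ∈ (0,1)`. -/
noncomputable def qADim {X : Type*} [PseudoMetricSpace X] (E : Set X) : ℝ :=
  sSup (hUpper E '' Ioo (0:ℝ) 1)

/-- The quasi-lower Assouad dimension `dim_qL E = lim_{δ → 0⁺} h̲_E(δ)`; since `h̲_E` is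
nondecreasing this limit equals the infimum over `δ ∈ (0,1)`. -/
noncomputable def qLDim {X : Type*} [PseudoMetricSpace X] (E : Set X) : ℝ :=
  sInf (hLower E '' Ioo (0:ℝ) 1)

/-- Assouad dimension `dim_A E = h̄_E(0)`. -/
noncomputable def assouadDim {X : Type*} [PseudoMetricSpace X] (E : Set X) : ℝ := hUpper E 0

/-- Lower (Assouad) dimension `dim_L E = h̲_E(0)`. -/
noncomputable def lowerAssouadDim {X : Type*} [PseudoMetricSpace X] (E : Set X) : ℝ := hLower E 0

/-- the cover-set of A at scale r -/
def coverSet (A : Set ℝ) (r : ℝ) : Set ℕ :=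
  {n : ℕ | ∃ S : Finset ℝ, S.card = n ∧ A ⊆ ⋃ x ∈ S, closedBall x r}

lemma coverNum_eq (A : Set ℝ) (r : ℝ) : coverNum A r = sInf (coverSet A r) := rfl

/-- covering an interval by k balls of radius r -/
lemma icc_subset_cover (u v r : ℝ) (hr : 0 < r) (k : ℕ) (hk : 1 ≤ k)
    (hv : v ≤ u + 2 * k * r) :
    Icc u v ⊆ ⋃ i ∈ Finset.range k, closedBall (u + (2 * i + 1) * r) r := by
  intro y hy
  obtain ⟨hy1, hy2⟩ := hy
  set i : ℕ := min (k - 1) ⌊(y - u) / (2 * r)⌋₊ with hi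
  have h2r : (0:ℝ) < 2 * r := by linarith
  have hik : i < k := lt_of_le_of_lt (min_le_left _ _) (Nat.sub_lt hk one_pos)
  refine mem_biUnion (Finset.mem_range.2 hik) ?_
  rw [mem_closedBall, Real.dist_eq, abs_le]
  have hynn : 0 ≤ y - u := by linarith
  rcases le_or_gt (⌊(y - u) / (2 * r)⌋₊) (k-1) with h | h
  · have hie : i = ⌊(y - u) / (2 * r)⌋₊ := min_eq_right h
    have h1 : (i : ℝ) ≤ (y - u) / (2 * r) := by
      rw [hie]; exact Nat.floor_le (by positivity)
    have h2 : (y - u) / (2 * r) < i + 1 := by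
      rw [hie]; exact Nat.lt_floor_add_one _
    rw [le_div_iff₀ h2r] at h1
    rw [div_lt_iff₀ h2r] at h2
    constructor <;> nlinarith
  · have hie : i = k - 1 := min_eq_left h.le
    have h1 : ((k:ℝ) - 1) ≤ (y - u) / (2 * r) := by
      have : ((k - 1 : ℕ):ℝ) ≤ ⌊(y - u) / (2 * r)⌋₊ := by exact_mod_cast h.le
      calc ((k:ℝ) - 1) ≤ ((k-1:ℕ):ℝ) := by
            rw [Nat.cast_sub hk]; simp
        _ ≤ _ := this
        _ ≤ _ := Nat.floor_le (by positivity)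
    have h1' : 2 * ((k:ℝ) - 1) * r ≤ y - u := by
      rw [le_div_iff₀ h2r] at h1; nlinarith
    have hik' : (i:ℝ) = (k:ℝ) - 1 := by
      rw [hie, Nat.cast_sub hk]; simp
    constructor <;> nlinarith [hv]

lemma coverNum_le_card {A : Set ℝ} {r : ℝ} (S : Finset ℝ)
    (h : A ⊆ ⋃ x ∈ S, closedBall x r) : coverNum A r ≤ S.card :=
  Nat.sInf_le ⟨S, rfl, h⟩

lemma coverSet_nonempty_of_subset_Icc {A : Set ℝ} {r u v : ℝ} (hr : 0 < r)
    (h : A ⊆ Icc u v) : (coverSet A r).Nonempty := by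
  obtain ⟨k, hk⟩ := exists_nat_ge ((v - u) / (2 * r))
  have h2r : (0:ℝ) < 2 * r := by linarith
  refine ⟨((Finset.range (k+1)).image (fun i : ℕ => u + (2 * i + 1) * r)).card,
    _, rfl, ?_⟩
  intro y hy
  have := icc_subset_cover u v r hr (k+1) (Nat.le_add_left 1 k)
    (by rw [div_le_iff₀ h2r] at hk; push_cast; nlinarith) (h hy)
  simp only [mem_iUnion, Finset.mem_range, exists_prop] at this
  obtain ⟨i, hik, hball⟩ := this
  exact mem_biUnion (Finset.mem_image_of_mem _ (Finset.mem_range.2 hik)) hball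

/-- coverNum bound for sets in an interval. -/
lemma coverNum_le_of_subset_Icc {A : Set ℝ} {r u v : ℝ} (hr : 0 < r) (k : ℕ) (hk : 1 ≤ k)
    (hv : v ≤ u + 2 * k * r) (h : A ⊆ Icc u v) : coverNum A r ≤ k := by
  refine le_trans (coverNum_le_card ((Finset.range k).image (fun i : ℕ => u + (2 * i + 1) * r)) ?_)
    (le_trans Finset.card_image_le (by simp))
  intro y hy
  have := icc_subset_cover u v r hr k hk hv (h hy)
  simp only [mem_iUnion, Finset.mem_range, exists_prop] at this
  obtain ⟨i, hik, hball⟩ := this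
  exact mem_biUnion (Finset.mem_image_of_mem _ (Finset.mem_range.2 hik)) hball

/-- lower bound for coverNum from a separated subset -/
lemma card_le_coverNum {A : Set ℝ} {r : ℝ} (T : Finset ℝ) (hT : ↑T ⊆ A)
    (hsep : ∀ x ∈ T, ∀ y ∈ T, x ≠ y → 2 * r < dist x y)
    (hne : (coverSet A r).Nonempty) : T.card ≤ coverNum A r := by
  obtain ⟨S, hcard, hcov⟩ := Nat.sInf_mem hne
  rw [coverNum_eq, ← hcard]
  have hc : ∀ t ∈ T, ∃ x ∈ S, t ∈ closedBall x r := by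
    intro t ht
    have := hcov (hT ht)
    simpa using this
  choose f hfS hfb using hc
  classical
  let g : ℝ → ℝ := fun t => if ht : t ∈ T then f t ht else 0
  refine Finset.card_le_card_of_injOn g (fun t ht => by show (if h : t ∈ T then f t h else 0) ∈ S; rw [dif_pos (Finset.mem_coe.1 ht)]; exact hfS t ht) ?_
  intro x hx y hy hxy
  rw [Finset.mem_coe] at hx hy
  by_contra hne'
  have h1 : dist x (g x) ≤ r := by
    show dist x (if ht : x ∈ T then f x ht else 0) ≤ r
    rw [dif_pos hx]; exact hfb x hx
  have h2 : dist y (g y) ≤ r := by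
    show dist y (if ht : y ∈ T then f y ht else 0) ≤ r
    rw [dif_pos hy]; exact hfb y hy
  have hd : dist x y ≤ 2 * r := by
    calc dist x y ≤ dist x (g x) + dist (g x) y := dist_triangle _ _ _
      _ ≤ r + r := add_le_add h1 (by rw [hxy, dist_comm]; exact h2)
      _ = 2 * r := by ring
  linarith [hsep x hx y hy hne']

/-- length lower bound -/
lemma length_le_card_mul {u v ρ : ℝ} (hρ : 0 ≤ ρ) (S : Finset ℝ)
    (h : Icc u v ⊆ ⋃ x ∈ S, closedBall x ρ) : v - u ≤ S.card * (2 * ρ) := by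
  rcases le_or_gt v u with hvu | hvu
  · have : (0:ℝ) ≤ S.card * (2 * ρ) := by positivity
    linarith
  · have hvol : MeasureTheory.volume (Icc u v) ≤ S.card * ENNReal.ofReal (2 * ρ) := by
      calc MeasureTheory.volume (Icc u v) ≤ MeasureTheory.volume (⋃ x ∈ S, closedBall x ρ) :=
            MeasureTheory.measure_mono h
        _ ≤ ∑ x ∈ S, MeasureTheory.volume (closedBall x ρ) :=
            MeasureTheory.measure_biUnion_finset_le S _
        _ = ∑ x ∈ S, ENNReal.ofReal (2 * ρ) := by
            refine Finset.sum_congr rfl (fun x _ => ?_)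
            rw [Real.volume_closedBall]
        _ = S.card * ENNReal.ofReal (2 * ρ) := by
            rw [Finset.sum_const, nsmul_eq_mul]
    rw [Real.volume_Icc] at hvol
    have : ENNReal.ofReal (v - u) ≤ ENNReal.ofReal ((S.card : ℝ) * (2 * ρ)) := by
      rw [ENNReal.ofReal_mul (by positivity)]
      simpa using hvol
    exact (ENNReal.ofReal_le_ofReal_iff (by positivity)).1 this

/-- coverNum lower bound from density: if A ∩ Icc is r-dense in Icc u v -/
lemma dense_le_coverNum {A : Set ℝ} {u v r : ℝ} (hr : 0 < r)
    (hdense : ∀ y ∈ Icc u v, ∃ z ∈ A, |z - y| ≤ r)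
    (hne : (coverSet A r).Nonempty) :
    v - u ≤ (coverNum A r : ℝ) * (4 * r) := by
  obtain ⟨S, hcard, hcov⟩ := Nat.sInf_mem hne
  have h2 : Icc u v ⊆ ⋃ x ∈ S, closedBall x (2 * r) := by
    intro y hy
    obtain ⟨z, hzA, hzy⟩ := hdense y hy
    have := hcov hzA
    simp only [mem_iUnion, exists_prop] at this ⊢
    obtain ⟨x, hxS, hzx⟩ := this
    refine ⟨x, hxS, ?_⟩
    rw [mem_closedBall] at hzx ⊢
    calc dist y x ≤ dist y z + dist z x := dist_triangle _ _ _
      _ ≤ r + r := add_le_add (by rw [Real.dist_eq, abs_sub_comm]; exact hzy) hzx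
      _ = 2 * r := by ring
  have := length_le_card_mul (by linarith : (0:ℝ) ≤ 2*r) S h2
  rw [coverNum_eq, ← hcard]
  linarith


def locSet (E : Set ℝ) (r R : ℝ) : Set ℕ :=
  {n : ℕ | ∃ x ∈ E, n = coverNum (E ∩ closedBall x R) r}

lemma coverNumLoc_eq (E : Set ℝ) (r R : ℝ) : coverNumLoc E r R = sSup (locSet E r R) := rfl

lemma coverNum_inter_ball_le {A : Set ℝ} {x r R : ℝ} (hr : 0 < r) (hR : 0 ≤ R) :
    coverNum (A ∩ closedBall x R) r ≤ ⌈R / r⌉₊ + 1 := by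
  refine coverNum_le_of_subset_Icc (u := x - R) (v := x + R) hr (⌈R / r⌉₊ + 1)
    (Nat.le_add_left 1 _) ?_ ?_
  · have h1 : R / r ≤ (⌈R / r⌉₊ : ℝ) := Nat.le_ceil _
    rw [div_le_iff₀ hr] at h1
    push_cast
    nlinarith
  · rw [Real.closedBall_eq_Icc]
    exact inter_subset_right

lemma locSet_bddAbove {E : Set ℝ} {r R : ℝ} (hr : 0 < r) (hR : 0 ≤ R) :
    BddAbove (locSet E r R) := by
  refine ⟨⌈R / r⌉₊ + 1, fun n hn => ?_⟩
  obtain ⟨x, _, rfl⟩ := hn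
  exact coverNum_inter_ball_le hr hR

lemma coverNumLoc_le {E : Set ℝ} {r R : ℝ} {k : ℕ}
    (h : ∀ x ∈ E, coverNum (E ∩ closedBall x R) r ≤ k) :
    coverNumLoc E r R ≤ k := by
  rw [coverNumLoc_eq]
  rcases (locSet E r R).eq_empty_or_nonempty with he | hne
  · rw [he, csSup_empty]; exact Nat.zero_le _
  · exact csSup_le hne (by rintro n ⟨x, hx, rfl⟩; exact h x hx)

lemma le_coverNumLoc {E : Set ℝ} {r R : ℝ} {x : ℝ} (hx : x ∈ E) (hr : 0 < r) (hR : 0 ≤ R) :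
    coverNum (E ∩ closedBall x R) r ≤ coverNumLoc E r R :=
  le_csSup (locSet_bddAbove hr hR) ⟨x, hx, rfl⟩

/-- Real-valued bound: coverNumLoc ≤ 3 (R/r) when r ≤ R. -/
lemma coverNumLoc_le_three_mul {E : Set ℝ} {r R : ℝ} (hr : 0 < r) (hrR : r ≤ R) :
    (coverNumLoc E r R : ℝ) ≤ 3 * (R / r) := by
  have hR : 0 ≤ R := le_of_lt (lt_of_lt_of_le hr hrR)
  have h1 : coverNumLoc E r R ≤ ⌈R / r⌉₊ + 1 :=
    coverNumLoc_le (fun x _ => coverNum_inter_ball_le hr hR)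
  have h2 : ((⌈R / r⌉₊ : ℝ) + 1) ≤ R / r + 2 := by
    have := Nat.ceil_lt_add_one (by positivity : (0:ℝ) ≤ R / r)
    linarith
  have h3 : (1:ℝ) ≤ R / r := (one_le_div hr).2 hrR
  calc (coverNumLoc E r R : ℝ) ≤ ((⌈R / r⌉₊ : ℝ) + 1) := by exact_mod_cast h1
    _ ≤ R / r + 2 := h2
    _ ≤ 3 * (R / r) := by linarith

lemma d_antitone {a : ℕ → ℝ} (hdec : ∀ j, a (j+1) - a (j+2) ≤ a j - a (j+1)) :
    Antitone (fun j => a j - a (j+1)) :=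
  antitone_nat_of_succ_le (fun n => hdec n)

lemma a_strictAnti {a : ℕ → ℝ} (hpos : ∀ j, 0 < a j - a (j+1)) : StrictAnti a :=
  strictAnti_nat_of_succ_lt (fun n => by have := hpos n; linarith)

lemma telescope (a : ℕ → ℝ) (k : ℕ) :
    ∑ i ∈ Finset.range k, (a i - a (i+1)) = a 0 - a k :=
  Finset.sum_range_sub' (fun i => a i) k

lemma d_le {a : ℕ → ℝ} (hmem : ∀ j, a j ∈ Set.Icc (0:ℝ) 1)
    (hdec : ∀ j, a (j+1) - a (j+2) ≤ a j - a (j+1)) (j : ℕ) :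
    a j - a (j+1) ≤ 1 / (j + 1) := by
  have hsum : ((j:ℝ) + 1) * (a j - a (j+1)) ≤ ∑ i ∈ Finset.range (j+1), (a i - a (i+1)) := by
    have hterm : ∀ i ∈ Finset.range (j+1), (a j - a (j+1)) ≤ a i - a (i+1) := by
      intro i hi
      exact d_antitone hdec (Nat.lt_succ_iff.1 (Finset.mem_range.1 hi))
    calc ((j:ℝ) + 1) * (a j - a (j+1)) = ∑ _i ∈ Finset.range (j+1), (a j - a (j+1)) := by
          rw [Finset.sum_const, Finset.card_range, nsmul_eq_mul]; push_cast; ring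
      _ ≤ _ := Finset.sum_le_sum hterm
  rw [telescope] at hsum
  have h0 := (hmem 0).2
  have h1 := (hmem (j+1)).1
  rw [le_div_iff₀ (by positivity : (0:ℝ) < (j:ℝ)+1)]
  nlinarith

lemma a_bddBelow {a : ℕ → ℝ} (hmem : ∀ j, a j ∈ Set.Icc (0:ℝ) 1) :
    BddBelow (Set.range a) := ⟨0, by rintro x ⟨j, rfl⟩; exact (hmem j).1⟩

lemma a_tendsto {a : ℕ → ℝ} (hmem : ∀ j, a j ∈ Set.Icc (0:ℝ) 1)
    (hpos : ∀ j, 0 < a j - a (j+1)) :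
    Tendsto a atTop (nhds (⨅ j, a j)) :=
  tendsto_atTop_ciInf ((a_strictAnti hpos).antitone) (a_bddBelow hmem)

lemma iInf_le_a {a : ℕ → ℝ} (hmem : ∀ j, a j ∈ Set.Icc (0:ℝ) 1) (j : ℕ) :
    (⨅ i, a i) ≤ a j := ciInf_le (a_bddBelow hmem) j

/-- density of the tail: any point of [L, a m] is r-close from above by some a j, j ≥ m -/
lemma tail_dense {a : ℕ → ℝ} (hmem : ∀ j, a j ∈ Set.Icc (0:ℝ) 1)
    (hpos : ∀ j, 0 < a j - a (j+1)) {m : ℕ} {r y : ℝ} (hr : 0 < r)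
    (htail : ∀ j, m ≤ j → a j - a (j+1) ≤ r)
    (hy1 : (⨅ i, a i) ≤ y) (hy2 : y ≤ a m) :
    ∃ j, m ≤ j ∧ y ≤ a j ∧ a j ≤ y + r := by
  set L := ⨅ i, a i with hL
  have hne : {j | m ≤ j ∧ a j ≤ y + r}.Nonempty := by
    have h1 : ∀ᶠ j in atTop, a j < y + r :=
      (a_tendsto hmem hpos).eventually (gt_mem_nhds (by linarith : L < y + r))
    obtain ⟨j, hj1, hj2⟩ := ((eventually_ge_atTop m).and h1).exists
    exact ⟨j, hj1, hj2.le⟩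
  set j0 := sInf {j | m ≤ j ∧ a j ≤ y + r} with hj0
  obtain ⟨hj0m, hj0le⟩ := Nat.sInf_mem hne
  refine ⟨j0, hj0m, ?_, hj0le⟩
  rcases Nat.eq_or_lt_of_le hj0m with he | hlt
  · show y ≤ a j0
    rw [hj0, ← he]; exact hy2
  · have hnotmem : j0 - 1 ∉ {j | m ≤ j ∧ a j ≤ y + r} :=
      Nat.notMem_of_lt_sInf (by omega)
    have hm1 : m ≤ j0 - 1 := by omega
    have hgt : y + r < a (j0 - 1) := by
      by_contra hcon
      exact hnotmem ⟨hm1, le_of_not_gt hcon⟩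
    have hd := htail (j0 - 1) hm1
    have hsucc : j0 - 1 + 1 = j0 := by omega
    rw [hsucc] at hd
    linarith


def hSet (E : Set ℝ) (δ : ℝ) : Set ℝ :=
  {α : ℝ | 0 ≤ α ∧ ∃ b c : ℝ, 0 < b ∧ 0 < c ∧ ∀ r R : ℝ,
    0 < r → r ≤ R ^ (1 + δ) → R ^ (1 + δ) ≤ R → R ≤ b →
    (coverNumLoc E r R : ℝ) ≤ c * (R / r) ^ α}

lemma hUpper_eq (E : Set ℝ) (δ : ℝ) : hUpper E δ = sInf (hSet E δ) := rfl

lemma one_mem_hSet (E : Set ℝ) (δ : ℝ) : (1:ℝ) ∈ hSet E δ := by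
  refine ⟨zero_le_one, 1, 3, one_pos, by norm_num, fun r R hr h1 h2 _ => ?_⟩
  have hrR : r ≤ R := h1.trans h2
  have := coverNumLoc_le_three_mul (E := E) hr hrR
  rw [Real.rpow_one]; linarith

lemma hUpper_nonneg (E : Set ℝ) (δ : ℝ) : 0 ≤ hUpper E δ := by
  rw [hUpper_eq]
  exact le_csInf ⟨1, one_mem_hSet E δ⟩ (fun α hα => hα.1)

lemma hUpper_le_one (E : Set ℝ) (δ : ℝ) : hUpper E δ ≤ 1 := by
  rw [hUpper_eq]
  exact csInf_le ⟨0, fun α hα => hα.1⟩ (one_mem_hSet E δ)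

/-- index where gaps drop to ≤ r -/
noncomputable def mIdx (a : ℕ → ℝ) (r : ℝ) : ℕ := sInf {j | a j - a (j+1) ≤ r}

lemma mIdx_spec {a : ℕ → ℝ} (hmem : ∀ j, a j ∈ Set.Icc (0:ℝ) 1)
    (hdec : ∀ j, a (j+1) - a (j+2) ≤ a j - a (j+1)) {r : ℝ} (hr : 0 < r) :
    (∀ j, j < mIdx a r → r < a j - a (j+1)) ∧
    (∀ j, mIdx a r ≤ j → a j - a (j+1) ≤ r) := by
  have hne : {j | a j - a (j+1) ≤ r}.Nonempty := by
    refine ⟨⌈1/r⌉₊, ?_⟩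
    have h1 : 1/r ≤ (⌈1/r⌉₊ : ℝ) := Nat.le_ceil _
    have h2 := d_le hmem hdec ⌈1/r⌉₊
    have h3 : 1 / ((⌈1/r⌉₊:ℝ) + 1) ≤ r := by
      rw [div_le_iff₀ (by positivity)]
      rw [div_le_iff₀ hr] at h1
      nlinarith
    exact h2.trans h3
  have hmem' := Nat.sInf_mem hne
  constructor
  · intro j hj
    have := Nat.notMem_of_lt_sInf hj
    simpa using lt_of_not_ge this
  · intro j hj
    exact le_trans (d_antitone hdec hj) hmem'

/-- structural bound N_r(E) ≤ m + ℓ/(2r) + 2 -/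
lemma coverNum_E_le {a : ℕ → ℝ} (hmem : ∀ j, a j ∈ Set.Icc (0:ℝ) 1)
    (hpos : ∀ j, 0 < a j - a (j+1))
    (hdec : ∀ j, a (j+1) - a (j+2) ≤ a j - a (j+1)) {r : ℝ} (hr : 0 < r) :
    (coverNum (Set.range a) r : ℝ) ≤
      (mIdx a r : ℝ) + (a (mIdx a r) - (⨅ i, a i)) / (2*r) + 2 := by
  classical
  set m := mIdx a r
  set L := ⨅ i, a i with hL
  set x := (a m - L) / (2*r) with hx
  have hLm : L < a m := by
    have h1 := iInf_le_a hmem (m+1)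
    have h2 := hpos m
    show (⨅ i, a i) < a m
    linarith
  have hxpos : 0 < x := div_pos (by linarith) (by positivity)
  set k := ⌈x⌉₊ with hk
  have hk1 : 1 ≤ k := Nat.one_le_iff_ne_zero.2 (by
    simp only [hk, ne_eq, Nat.ceil_eq_zero, not_le]; linarith)
  set S1 := (Finset.range (m+1)).image a with hS1
  set S2 := (Finset.range k).image (fun i : ℕ => L + (2 * i + 1) * r) with hS2
  have hcov : Set.range a ⊆ ⋃ y ∈ S1 ∪ S2, closedBall y r := by
    rintro _ ⟨j, rfl⟩
    rcases le_or_gt j m with hj | hj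
    · exact mem_biUnion (Finset.mem_union_left _
        (Finset.mem_image_of_mem a (Finset.mem_range.2 (by omega))))
        (mem_closedBall_self hr.le)
    · have hmemIcc : a j ∈ Icc L (a m) :=
        ⟨iInf_le_a hmem j, (a_strictAnti hpos).antitone hj.le⟩
      have hsub := icc_subset_cover L (a m) r hr k hk1 (by
        have h1 : x ≤ (k:ℝ) := Nat.le_ceil _
        rw [hx, div_le_iff₀ (by positivity)] at h1
        nlinarith) hmemIcc
      simp only [mem_iUnion, Finset.mem_range, exists_prop] at hsub
      obtain ⟨i, hik, hball⟩ := hsub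
      exact mem_biUnion (Finset.mem_union_right _
        (Finset.mem_image_of_mem _ (Finset.mem_range.2 hik))) hball
  have hcard : (S1 ∪ S2).card ≤ (m + 1) + k := by
    calc (S1 ∪ S2).card ≤ S1.card + S2.card := Finset.card_union_le _ _
      _ ≤ (m+1) + k := add_le_add
          (Finset.card_image_le.trans (by simp))
          (Finset.card_image_le.trans (by simp))
  have h1 := (coverNum_le_card (S1 ∪ S2) hcov).trans hcard
  have h2 : ((k:ℝ)) ≤ x + 1 := le_of_lt (Nat.ceil_lt_add_one hxpos.le)
  calc (coverNum (Set.range a) r : ℝ) ≤ ((m + 1 + k : ℕ) : ℝ) := by exact_mod_cast h1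
    _ ≤ (m:ℝ) + 1 + (x + 1) := by push_cast; linarith
    _ = (m:ℝ) + x + 2 := by ring


lemma log_nat_nonneg (n : ℕ) : 0 ≤ Real.log n := by
  rcases Nat.eq_zero_or_pos n with h | h
  · simp [h]
  · exact Real.log_nonneg (by exact_mod_cast h)

lemma f_nonneg (E : Set ℝ) {r : ℝ} (hr : 0 < r) (hr1 : r < 1) :
    0 ≤ Real.log (coverNum E r) / Real.log (1 / r) :=
  div_nonneg (log_nat_nonneg _) (Real.log_nonneg (by rw [le_div_iff₀ hr]; linarith))

lemma coverNum_le_inv {E : Set ℝ} (hE : E ⊆ Icc 0 1) {r : ℝ} (hr : 0 < r) (hr2 : r ≤ 1/2) :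
    (coverNum E r : ℝ) ≤ 1 / r := by
  set k := ⌈1/(2*r)⌉₊ with hk
  have hk1 : 1 ≤ k := Nat.one_le_iff_ne_zero.2 (by
    simp only [hk, ne_eq, Nat.ceil_eq_zero, not_le]; positivity)
  have h1 : coverNum E r ≤ k := by
    refine coverNum_le_of_subset_Icc (u := 0) (v := 1) hr k hk1 ?_ hE
    have := Nat.le_ceil (1/(2*r))
    rw [div_le_iff₀ (by positivity)] at this
    linarith
  have h2 : (k:ℝ) < 1/(2*r) + 1 := Nat.ceil_lt_add_one (by positivity)
  have h3 : 1/(2*r) + 1 ≤ 1/r := by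
    rw [div_add' _ _ _ (by positivity), div_le_div_iff₀ (by positivity) hr]
    nlinarith
  calc (coverNum E r : ℝ) ≤ (k:ℝ) := by exact_mod_cast h1
    _ ≤ 1/r := by linarith

lemma f_le_one {E : Set ℝ} (hE : E ⊆ Icc 0 1) {r : ℝ} (hr : 0 < r) (hr2 : r ≤ 1/2) :
    Real.log (coverNum E r) / Real.log (1 / r) ≤ 1 := by
  have hinv : 1 < 1/r := by rw [lt_div_iff₀ hr]; linarith
  have hlogpos : 0 < Real.log (1/r) := Real.log_pos hinv
  rw [div_le_one hlogpos]
  rcases Nat.eq_zero_or_pos (coverNum E r) with h | h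
  · rw [h]; push_cast; rw [Real.log_zero]; exact hlogpos.le
  · exact Real.log_le_log (by exact_mod_cast h) (coverNum_le_inv hE hr hr2)

/-- bridge: f r ≥ ε gives coverNum ≥ (1/r)^ε -/
lemma coverNum_ge_of_f {E : Set ℝ} {r ε : ℝ} (hr : 0 < r) (hr1 : r < 1) (hε : 0 < ε)
    (hf : ε ≤ Real.log (coverNum E r) / Real.log (1 / r)) :
    (1/r) ^ ε ≤ (coverNum E r : ℝ) := by
  have hinv : 1 < 1/r := by rw [lt_div_iff₀ hr]; linarith
  have hlogpos : 0 < Real.log (1/r) := Real.log_pos hinv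
  rw [le_div_iff₀ hlogpos] at hf
  have hNpos : 0 < Real.log (coverNum E r) := lt_of_lt_of_le (by positivity) hf
  have hN0 : coverNum E r ≠ 0 := by
    intro h; rw [h] at hNpos; simp at hNpos
  have hN : (0:ℝ) < coverNum E r := by exact_mod_cast Nat.pos_of_ne_zero hN0
  calc (1/r) ^ ε = Real.exp (Real.log (1/r) * ε) := by
        rw [Real.rpow_def_of_pos (by positivity)]
    _ ≤ Real.exp (Real.log (coverNum E r)) := Real.exp_le_exp.2 (by linarith)
    _ = (coverNum E r : ℝ) := Real.exp_log hN

/-- bridge: f r ≤ ε gives coverNum ≤ (1/r)^ε -/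
lemma coverNum_le_of_f {E : Set ℝ} {r ε : ℝ} (hr : 0 < r) (hr1 : r < 1) (hε : 0 < ε)
    (hf : Real.log (coverNum E r) / Real.log (1 / r) ≤ ε) :
    (coverNum E r : ℝ) ≤ (1/r) ^ ε := by
  have hinv : 1 < 1/r := by rw [lt_div_iff₀ hr]; linarith
  have hlogpos : 0 < Real.log (1/r) := Real.log_pos hinv
  rw [div_le_iff₀ hlogpos] at hf
  rcases Nat.eq_zero_or_pos (coverNum E r) with h | h
  · rw [h]; push_cast; positivity
  · have hN : (0:ℝ) < coverNum E r := by exact_mod_cast h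
    calc (coverNum E r : ℝ) = Real.exp (Real.log (coverNum E r)) := (Real.exp_log hN).symm
      _ ≤ Real.exp (Real.log (1/r) * ε) := Real.exp_le_exp.2 (by linarith)
      _ = (1/r) ^ ε := (Real.rpow_def_of_pos (by positivity) _).symm

lemma upperBox_S_props {E : Set ℝ} (hE : E ⊆ Icc 0 1) :
    (1:ℝ) ∈ {t : ℝ | ∀ᶠ r in nhdsWithin 0 (Ioi 0),
        Real.log (coverNum E r) / Real.log (1 / r) ≤ t} ∧
    BddBelow {t : ℝ | ∀ᶠ r in nhdsWithin 0 (Ioi 0),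
        Real.log (coverNum E r) / Real.log (1 / r) ≤ t} := by
  have hIoo : ∀ b : ℝ, 0 < b → Ioo (0:ℝ) b ∈ nhdsWithin 0 (Ioi 0) := by
    intro b hb
    exact Ioo_mem_nhdsGT_of_mem ⟨le_refl 0, hb⟩
  constructor
  · filter_upwards [hIoo (1/2) (by norm_num)] with r hr
    exact f_le_one hE hr.1 hr.2.le
  · refine ⟨0, fun t ht => ?_⟩
    have h2 : ∀ᶠ r in nhdsWithin 0 (Ioi 0),
        0 ≤ Real.log (coverNum E r) / Real.log (1 / r) := by
      filter_upwards [hIoo 1 one_pos] with r hr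
      exact f_nonneg E hr.1 hr.2
    rw [mem_setOf_eq] at ht
    obtain ⟨r, h1, h2⟩ := (ht.and h2).exists
    linarith

/-- From positive upper box dimension: frequent large cover numbers. -/
lemma freq_coverNum {E : Set ℝ} (hE : E ⊆ Icc 0 1) (h : 0 < upperBoxDim E) :
    ∃ ε : ℝ, 0 < ε ∧ ε ≤ 1/2 ∧ ∀ r₀ : ℝ, 0 < r₀ →
      ∃ r, 0 < r ∧ r < r₀ ∧ r < 1 ∧ (1/r) ^ ε ≤ (coverNum E r : ℝ) := by
  obtain ⟨hone, hbdd⟩ := upperBox_S_props hE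
  set ε := min (upperBoxDim E / 2) (1/2) with hε
  have hεpos : 0 < ε := lt_min (by linarith) (by norm_num)
  have hεlt : ε < upperBoxDim E := lt_of_le_of_lt (min_le_left _ _) (by linarith)
  refine ⟨ε, hεpos, min_le_right _ _, fun r₀ hr₀ => ?_⟩
  by_contra hcon
  push_neg at hcon
  have hev : ∀ᶠ r in nhdsWithin 0 (Ioi 0),
      Real.log (coverNum E r) / Real.log (1 / r) ≤ ε := by
    filter_upwards [Ioo_mem_nhdsGT_of_mem
      (⟨le_refl (0:ℝ), lt_min hr₀ one_pos⟩ : (0:ℝ) ∈ Ico 0 (min r₀ 1))] with r hr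
    by_contra hf
    push_neg at hf
    have := coverNum_ge_of_f hr.1 (lt_of_lt_of_le hr.2 (min_le_right _ _)) hεpos hf.le
    exact absurd this (not_le.2 (hcon r hr.1 (lt_of_lt_of_le hr.2 (min_le_left _ _))
      (lt_of_lt_of_le hr.2 (min_le_right _ _))))
  have : upperBoxDim E ≤ ε := by
    rw [upperBoxDim, Filter.limsup_eq]
    exact csInf_le hbdd hev
  linarith

/-- From zero upper box dimension: eventual small cover numbers. -/
lemma ev_coverNum {E : Set ℝ} (hE : E ⊆ Icc 0 1) (h : upperBoxDim E = 0)
    {ε : ℝ} (hε : 0 < ε) :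
    ∃ b : ℝ, 0 < b ∧ b < 1 ∧ ∀ r, 0 < r → r ≤ b → (coverNum E r : ℝ) ≤ (1/r) ^ ε := by
  obtain ⟨hone, hbdd⟩ := upperBox_S_props hE
  have hSne : {t : ℝ | ∀ᶠ r in nhdsWithin 0 (Ioi 0),
      Real.log (coverNum E r) / Real.log (1 / r) ≤ t}.Nonempty := ⟨1, hone⟩
  have hex : ∃ t ∈ {t : ℝ | ∀ᶠ r in nhdsWithin 0 (Ioi 0),
      Real.log (coverNum E r) / Real.log (1 / r) ≤ t}, t < ε := by
    by_contra hcon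
    push_neg at hcon
    have : ε ≤ upperBoxDim E := by
      rw [upperBoxDim, Filter.limsup_eq]
      exact le_csInf hSne hcon
    rw [h] at this; linarith
  obtain ⟨t, ht, htε⟩ := hex
  rw [mem_setOf_eq, eventually_iff_exists_mem] at ht
  obtain ⟨U, hU, hUt⟩ := ht
  rw [mem_nhdsGT_iff_exists_Ioc_subset] at hU
  obtain ⟨u, hu, hsub⟩ := hU
  refine ⟨min u (1/2), lt_min hu (by norm_num), lt_of_le_of_lt (min_le_right _ _) (by norm_num),
    fun r hr hrb => ?_⟩
  have hr1 : r < 1 := lt_of_le_of_lt (hrb.trans (min_le_right _ _)) (by norm_num)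
  have hrU : r ∈ U := hsub ⟨hr, hrb.trans (min_le_left _ _)⟩
  exact coverNum_le_of_f hr hr1 hε ((hUt r hrU).trans htε.le)

lemma coverNum_inter_le {A B : Set ℝ} {r : ℝ} (hne : (coverSet A r).Nonempty) :
    coverNum (A ∩ B) r ≤ coverNum A r := by
  obtain ⟨S, hcard, hcov⟩ := Nat.sInf_mem hne
  rw [coverNum_eq A, ← hcard]
  exact coverNum_le_card S (fun y hy => hcov hy.1)


lemma rpow_key {r R δ α : ℝ} (hr : 0 < r) (hδ : 0 < δ) (hα : 0 < α)
    (h1 : r ≤ R ^ (1 + δ)) (h2 : R ^ (1+δ) ≤ R) :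
    (1/r) ^ (α * δ / (1 + δ)) ≤ (R / r) ^ α := by
  have hR : 0 < R := lt_of_lt_of_le hr (h1.trans h2)
  have h1δ : (0:ℝ) < 1 + δ := by linarith
  have hroot : r ^ (1/(1+δ)) ≤ R := by
    have h := Real.rpow_le_rpow hr.le h1 (by positivity : (0:ℝ) ≤ 1/(1+δ))
    rwa [← Real.rpow_mul hR.le, mul_one_div, div_self (ne_of_gt h1δ), Real.rpow_one] at h
  have hstep : (1/r) ^ (δ/(1+δ)) ≤ R / r := by
    have e1 : (1/r) ^ (δ/(1+δ)) = r ^ (1/(1+δ) - 1) := by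
      rw [one_div, Real.inv_rpow hr.le, ← Real.rpow_neg hr.le]
      congr 1
      field_simp
      ring
    rw [e1, Real.rpow_sub hr, Real.rpow_one]
    gcongr
  have hfinal := Real.rpow_le_rpow (by positivity) hstep hα.le
  rwa [← Real.rpow_mul (by positivity : (0:ℝ) ≤ 1/r),
    div_mul_eq_mul_div, mul_comm δ α, mul_div_assoc, ← mul_div_assoc] at hfinal

lemma hUpper_zero_of_boxDim_zero {E : Set ℝ} (hE : E ⊆ Icc 0 1) (hEne : E.Nonempty)
    (h : upperBoxDim E = 0) {δ : ℝ} (hδ : δ ∈ Ioo (0:ℝ) 1) : hUpper E δ = 0 := by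
  refine le_antisymm ?_ (hUpper_nonneg E δ)
  have key : ∀ α : ℝ, 0 < α → hUpper E δ ≤ α := by
    intro α hα
    set ε := α * δ / (1 + δ) with hεd
    have hεpos : 0 < ε := div_pos (mul_pos hα hδ.1) (by linarith [hδ.1])
    obtain ⟨b, hb, hb1, hbound⟩ := ev_coverNum hE h hεpos
    rw [hUpper_eq]
    refine csInf_le ⟨0, fun β hβ => hβ.1⟩ ⟨hα.le, b, 1, hb, one_pos, fun r R hr h1 h2 h3 => ?_⟩
    have hrb : r ≤ b := (h1.trans h2).trans h3
    have hr1 : r < 1 := lt_of_le_of_lt hrb hb1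
    have hR : 0 < R := lt_of_lt_of_le hr (h1.trans h2)
    have hloc : (coverNumLoc E r R : ℝ) ≤ (coverNum E r : ℝ) := by
      have hmono : coverNumLoc E r R ≤ coverNum E r := by
        refine coverNumLoc_le (fun x _ => ?_)
        exact coverNum_inter_le (coverSet_nonempty_of_subset_Icc hr hE)
      exact_mod_cast hmono
    have hcov := hbound r hr hrb
    have hkey := rpow_key hr hδ.1 hα h1 h2
    have hmono2 : (1/r) ^ (ε/2)  ≤ (1/r) ^ ε := by
      apply Real.rpow_le_rpow_of_exponent_le
      · rw [le_div_iff₀ hr]; linarith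
      · linarith
    -- (1/r)^ε ≤ (R/r)^α since ε = αδ/(1+δ)
    rw [one_mul]
    calc (coverNumLoc E r R : ℝ) ≤ (coverNum E r : ℝ) := hloc
      _ ≤ (1/r) ^ ε := hcov
      _ ≤ (R/r) ^ α := hkey
  by_contra hcon
  push_neg at hcon
  have := key (hUpper E δ / 2) (by linarith)
  linarith

/-- helper: for any target V and exponent s>0 there is a threshold t so that
    r ≤ t implies V ≤ (1/r)^s. -/
lemma rpow_threshold {s V : ℝ} (hs : 0 < s) (hV : 0 < V) :
    ∃ t : ℝ, 0 < t ∧ ∀ r : ℝ, 0 < r → r ≤ t → V ≤ (1/r) ^ s := by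
  refine ⟨(1/V) ^ (1/s), by positivity, fun r hr hrt => ?_⟩
  have h1 : (1:ℝ)/((1/V) ^ (1/s)) = V ^ (1/s) := by
    rw [one_div, ← Real.inv_rpow (by positivity), one_div, inv_inv]
  have h2 : V ^ (1/s) ≤ 1/r := by
    rw [← h1]
    have ht : (0:ℝ) < (1/V) ^ (1/s) := by positivity
    rw [div_le_div_iff₀ ht hr]
    nlinarith
  calc V = (V ^ (1/s)) ^ s := by
        rw [← Real.rpow_mul hV.le, one_div, inv_mul_cancel₀ (ne_of_gt hs), Real.rpow_one]
    _ ≤ (1/r) ^ s := Real.rpow_le_rpow (by positivity) h2 hs.le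

/-- Case B of the main argument: the tail is dense at scale r over a long interval. -/
lemma caseB {a : ℕ → ℝ} (hmem : ∀ j, a j ∈ Set.Icc (0:ℝ) 1)
    (hpos : ∀ j, 0 < a j - a (j+1))
    {m : ℕ} {r ε α b c : ℝ}
    (htail : ∀ j, m ≤ j → a j - a (j+1) ≤ r)
    (hr : 0 < r) (hr2 : r ≤ 1/2) (hε : 0 < ε) (hε2 : ε ≤ 1/2)
    (hα0 : 0 ≤ α) (hα1 : α < 1) (hb : 0 < b) (hc : 0 < c)
    (hℓ : r * (1/r)^ε / 2 ≤ a m - (⨅ i, a i))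
    (hB1 : 2 ≤ (1/r)^(ε/2)) (hB2 : r ≤ b^2)
    (hB3 : 4*c+1 ≤ (1/r)^(ε*(1-α)/2))
    (hP : ∀ r' R : ℝ, 0 < r' → r' ≤ R ^ (1 + ε/4) → R ^ (1 + ε/4) ≤ R → R ≤ b →
      (coverNumLoc (Set.range a) r' R : ℝ) ≤ c * (R / r') ^ α) : False := by
  set L := ⨅ i, a i with hL
  set E := Set.range a with hEdef
  set x := 1/r with hx
  have hx1 : 1 < x := by rw [hx, lt_div_iff₀ hr]; linarith
  set R := r ^ (1 - ε/2) with hR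
  have hr1 : r < 1 := by linarith
  have hRpos : 0 < R := Real.rpow_pos_of_pos hr _
  have hR1 : R ≤ 1 := (Real.rpow_le_one hr.le hr1.le (by linarith)).trans (le_refl 1)
  -- R = r * x^(ε/2) and R/r = x^(ε/2)
  have hRr : R / r = x ^ (ε/2) := by
    have h1 : r ^ ((1 - ε/2) - 1) = R / r := by
      rw [Real.rpow_sub hr, Real.rpow_one, hR]
    have h2 : x ^ (ε/2) = r ^ (-(ε/2)) := by
      rw [hx, one_div, Real.inv_rpow hr.le, ← Real.rpow_neg hr.le]
    rw [h2, ← h1]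
    norm_num
  have hQ1 : (1:ℝ) ≤ x ^ (ε/2) := by linarith
  -- R ≤ ℓ
  have hRℓ : R ≤ a m - L := by
    have e1 : R = r * x ^ (ε/2) := by
      field_simp at hRr ⊢
      linarith [hRr]
    have e2 : x ^ (ε/2) * x ^ (ε/2) = x ^ ε := by
      rw [← Real.rpow_add (by linarith : (0:ℝ) < x)]; ring_nf
    have : r * x ^ (ε/2) ≤ r * x ^ ε / 2 := by
      rw [← e2]
      have := mul_le_mul_of_nonneg_left hB1 (by positivity : (0:ℝ) ≤ r * x ^ (ε/2))
      nlinarith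
    rw [e1]
    exact this.trans hℓ
  -- density bound
  have hdense : ∀ y ∈ Icc (a m - R) (a m), ∃ z ∈ E ∩ closedBall (a m) R, |z - y| ≤ r := by
    intro y hy
    have hyL : L ≤ y := by
      have : L ≤ a m - R := by linarith [hRℓ]
      linarith [hy.1]
    obtain ⟨j, hjm, hyj, hjy⟩ := tail_dense hmem hpos hr htail hyL hy.2
    refine ⟨a j, ⟨Set.mem_range_self j, ?_⟩,
      by rw [abs_sub_comm, abs_sub_le_iff]; constructor <;> linarith⟩
    rw [mem_closedBall, Real.dist_eq, abs_sub_le_iff]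
    have hja : a j ≤ a m := (a_strictAnti hpos).antitone hjm
    constructor <;> linarith [hy.1]
  have hne : (coverSet (E ∩ closedBall (a m) R) r).Nonempty := by
    refine coverSet_nonempty_of_subset_Icc hr (u := a m - R) (v := a m + R) ?_
    rw [Real.closedBall_eq_Icc]
    exact inter_subset_right
  have hlow := dense_le_coverNum hr hdense hne
  have hloc : (coverNum (E ∩ closedBall (a m) R) r : ℝ) ≤ (coverNumLoc E r R : ℝ) := by
    exact_mod_cast le_coverNumLoc (E := E) (x := a m) (Set.mem_range_self m) hr hRpos.le
  -- verify scale conditions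
  have hcond1 : r ≤ R ^ (1 + ε/4) := by
    have he : R ^ (1 + ε/4) = r ^ ((1 - ε/2) * (1 + ε/4)) := by
      rw [hR, ← Real.rpow_mul hr.le]
    rw [he]
    calc r = r ^ (1:ℝ) := (Real.rpow_one r).symm
      _ ≤ r ^ ((1 - ε/2) * (1 + ε/4)) :=
          Real.rpow_le_rpow_of_exponent_ge hr hr1.le (by nlinarith)
  have hcond2 : R ^ (1 + ε/4) ≤ R := by
    calc R ^ (1 + ε/4) ≤ R ^ (1:ℝ) :=
          Real.rpow_le_rpow_of_exponent_ge hRpos hR1 (by linarith)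
      _ = R := Real.rpow_one R
  have hcond3 : R ≤ b := by
    have h1 : R ≤ r ^ (1/2 : ℝ) :=
      Real.rpow_le_rpow_of_exponent_ge hr hr1.le (by linarith)
    have h2 : r ^ (1/2:ℝ) ≤ (b^2) ^ (1/2:ℝ) :=
      Real.rpow_le_rpow hr.le hB2 (by norm_num)
    have h3 : ((b^2:ℝ)) ^ (1/2:ℝ) = b := by
      rw [← Real.rpow_natCast b 2, ← Real.rpow_mul hb.le]
      norm_num
    linarith
  have hPP := hP r R hr hcond1 hcond2 hcond3
  -- contradiction: c * (R/r)^α < R/(4r) ≤ coverNumLoc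
  set Q := x ^ (ε/2) with hQ
  have hQpos : 0 < Q := by positivity
  have hviol : c * Q ^ α < Q / 4 := by
    have e1 : Q ^ (1-α) * Q ^ α = Q := by
      rw [← Real.rpow_add hQpos, sub_add_cancel, Real.rpow_one]
    have h4c : 4*c < Q ^ (1-α) := by
      have he : Q ^ (1-α) = x ^ (ε*(1-α)/2) := by
        rw [hQ, ← Real.rpow_mul (by positivity : (0:ℝ) ≤ x)]
        congr 1; ring
      rw [he]; linarith
    have hQα : 0 < Q ^ α := by positivity
    nlinarith
  have hdiv : R / (4*r) ≤ (coverNumLoc E r R : ℝ) := by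
    have h0 : a m - (a m - R) = R := by ring
    rw [h0] at hlow
    rw [div_le_iff₀ (by positivity)]
    calc R ≤ (coverNum (E ∩ closedBall (a m) R) r : ℝ) * (4*r) := hlow
      _ ≤ (coverNumLoc E r R : ℝ) * (4*r) := by
          apply mul_le_mul_of_nonneg_right hloc (by positivity)
  rw [hRr] at hPP
  have he2 : R / (4*r) = Q / 4 := by
    rw [show (4:ℝ)*r = r*4 by ring, ← div_div, hRr]
  rw [he2] at hdiv
  linarith

lemma pigeonhole {d : ℕ → ℝ} {C r : ℝ} (hd : ∀ j, 0 < d j) (hC : 1 ≤ C)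
    {I₁ k : ℕ} (hup : d (2^I₁ - 1) ≤ 1) (hlow : r < d (2^(I₁+k) - 1))
    (hCk : 1 ≤ C^k * r) :
    ∃ i, I₁ ≤ i ∧ i < I₁ + k ∧ d (2^i - 1) ≤ C * d (2^(i+1) - 1) := by
  by_contra hcon
  push_neg at hcon
  have claim : ∀ t, t ≤ k → C^t * d (2^(I₁+t) - 1) ≤ d (2^I₁ - 1) := by
    intro t
    induction t with
    | zero => intro _; simp
    | succ t ih =>
        intro ht
        have h1 := ih (by omega)
        have h2 := hcon (I₁+t) (by omega) (by omega)
        have hCt : (0:ℝ) < C^t := pow_pos (by linarith) t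
        have e : I₁ + (t+1) = (I₁ + t) + 1 := rfl
        rw [e]
        calc C^(t+1) * d (2^((I₁+t)+1) - 1) = C^t * (C * d (2^((I₁+t)+1) - 1)) := by ring
          _ ≤ C^t * d (2^(I₁+t) - 1) := by nlinarith
          _ ≤ d (2^I₁ - 1) := h1
  have hfin := claim k le_rfl
  have hCk0 : (0:ℝ) < C^k := pow_pos (by linarith) k
  nlinarith

set_option maxHeartbeats 1600000 in
lemma caseA {a : ℕ → ℝ} (hmem : ∀ j, a j ∈ Set.Icc (0:ℝ) 1)
    (hpos : ∀ j, 0 < a j - a (j+1))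
    (hdec : ∀ j, a (j+1) - a (j+2) ≤ a j - a (j+1))
    {m J : ℕ} {r ε α b c : ℝ}
    (hgap : ∀ j, j < m → r < a j - a (j+1))
    (hr : 0 < r) (hr2 : r ≤ 1/2) (hε : 0 < ε) (hε2 : ε ≤ 1/2)
    (hα0 : 0 ≤ α) (hα1 : α < 1) (hb : 0 < b) (hc : 0 < c)
    (hm : (1/r)^ε / 4 ≤ (m:ℝ))
    (hC1 : 128 ≤ (1/r)^ε)
    (hJ : ∀ j, J ≤ j → a j - (⨅ i, a i) ≤ b)
    (hA1 : (J:ℝ) + 1 ≤ (1/r)^(ε/4))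
    (hA2 : c * (3 * (2:ℝ)^((4:ℝ)/ε)) ^ α + 1 ≤ (1/r)^(ε*(1-α)/4))
    (hP : ∀ r' R : ℝ, 0 < r' → r' ≤ R ^ (1 + ε/4) → R ^ (1 + ε/4) ≤ R → R ≤ b →
      (coverNumLoc (Set.range a) r' R : ℝ) ≤ c * (R / r') ^ α) : False := by
  set L := ⨅ i, a i with hL
  set E := Set.range a with hEdef
  set x := (1:ℝ)/r with hx
  have hxr : x * r = 1 := by rw [hx]; field_simp
  have hx1 : 1 < x := by rw [hx, lt_div_iff₀ hr]; linarith
  set d : ℕ → ℝ := fun j => a j - a (j+1) with hd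
  set C := (2:ℝ)^((4:ℝ)/ε) with hC
  have hC1' : (1:ℝ) ≤ C := by
    rw [hC]
    calc (1:ℝ) = (2:ℝ)^(0:ℝ) := by rw [Real.rpow_zero]
      _ ≤ (2:ℝ)^((4:ℝ)/ε) := Real.rpow_le_rpow_of_exponent_le one_le_two (by positivity)
  -- m ≥ 32
  have hm32 : 32 ≤ m := by
    have : (32:ℝ) ≤ (m:ℝ) := by linarith
    exact_mod_cast this
  have hm0 : m ≠ 0 := by omega
  set I := Nat.log 2 m with hI
  have h2Im : 2^I ≤ m := Nat.pow_log_le_self 2 hm0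
  have hmI : m < 2^(I+1) := Nat.lt_pow_succ_log_self (by norm_num) m
  have hI5 : 5 ≤ I := by
    have h32 : 2^5 ≤ m := by omega
    have := lt_of_le_of_lt h32 hmI
    have := (Nat.pow_lt_pow_iff_right (by norm_num : 1 < 2)).1 this
    omega
  set k := I/2 with hk
  set I₁ := I - k with hI₁
  have hIk : I₁ + k = I := by omega
  -- x^ε ≤ 2^(I+3), as reals
  have hxI : x^ε ≤ (2:ℝ)^((I:ℝ)+3) := by
    have h1 : (m:ℝ) < (2:ℝ)^(I+1 : ℕ) := by exact_mod_cast hmI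
    have h2 : ((2:ℝ)^(I+1 : ℕ) : ℝ) = (2:ℝ)^((I:ℝ)+1) := by
      rw [← Real.rpow_natCast 2 (I+1)]; push_cast; ring_nf
    have h3 : (2:ℝ)^((I:ℝ)+3) = 4 * (2:ℝ)^((I:ℝ)+1) := by
      rw [show (I:ℝ)+3 = ((I:ℝ)+1) + 2 by ring, Real.rpow_add (by norm_num)]
      norm_num; ring
    have h4 : x^ε ≤ 4*(m:ℝ) := by linarith
    rw [h3]
    calc x^ε ≤ 4*(m:ℝ) := h4
      _ ≤ 4 * (2:ℝ)^((I:ℝ)+1) := by rw [← h2]; linarith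
  -- C^k * r ≥ 1
  have hCkr : 1 ≤ C^k * r := by
    have e1 : (C:ℝ)^k = (2:ℝ)^((4:ℝ)/ε * k) := by
      rw [hC, ← Real.rpow_natCast ((2:ℝ)^((4:ℝ)/ε)) k, ← Real.rpow_mul (by norm_num)]
    have h4k : (I:ℝ) + 3 ≤ 4 * (k:ℝ) := by
      have : I + 3 ≤ 4 * k := by omega
      exact_mod_cast this
    have hxle : x ≤ (2:ℝ)^((4:ℝ)/ε * k) := by
      have h5 : x = (x^ε)^(1/ε) := by
        rw [← Real.rpow_mul (by positivity), mul_one_div, div_self (ne_of_gt hε), Real.rpow_one]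
      have h6 : (x^ε)^(1/ε) ≤ ((2:ℝ)^((I:ℝ)+3))^(1/ε) :=
        Real.rpow_le_rpow (by positivity) hxI (by positivity)
      have h7 : ((2:ℝ)^((I:ℝ)+3))^(1/ε) = (2:ℝ)^(((I:ℝ)+3)/ε) := by
        rw [← Real.rpow_mul (by norm_num), mul_one_div]
      have h8 : (2:ℝ)^(((I:ℝ)+3)/ε) ≤ (2:ℝ)^((4:ℝ)/ε * k) := by
        apply Real.rpow_le_rpow_of_exponent_le one_le_two
        rw [div_le_iff₀ hε]
        calc (I:ℝ)+3 ≤ 4*(k:ℝ) := h4k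
          _ = 4/ε * k * ε := by field_simp
      rw [h5]; rw [h7] at h6; linarith
    rw [e1]
    calc (1:ℝ) = x * r := hxr.symm
      _ ≤ (2:ℝ)^((4:ℝ)/ε * k) * r := by nlinarith
  -- apply pigeonhole
  have hdpos : ∀ j, 0 < d j := hpos
  have hup : d (2^I₁ - 1) ≤ 1 := by
    have h1 := (hmem (2^I₁ - 1)).2
    have h2 := (hmem (2^I₁ - 1 + 1)).1
    simp only [hd]; linarith
  have hlow : r < d (2^(I₁+k) - 1) := by
    rw [hIk]
    exact hgap _ (by omega)
  obtain ⟨i, hi1, hi2, hpig⟩ := pigeonhole hdpos hC1' hup hlow hCkr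
  rw [hIk] at hi2
  -- define block
  set n := 2^i with hn
  have hn1 : 1 ≤ n := Nat.one_le_two_pow
  set p := n - 1 with hp
  set q := 2*n - 1 with hq
  have hpq : p + n = q := by omega
  have h2i : 2^(i+1) = 2*n := by rw [hn, pow_succ]; ring
  have hqm : q < m := by
    have h1 : 2^(i+1) ≤ 2^I := Nat.pow_le_pow_right (by norm_num) (by omega)
    omega
  set g := d q with hg
  have hgr : r < g := hgap q hqm
  have hgpos : 0 < g := hpos q
  have hpig' : d p ≤ C * g := by
    have e2 : 2^(i+1) - 1 = q := by omega
    rw [hg, ← e2]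
    exact hpig
  -- sum bounds
  have hsum : ∑ t ∈ Finset.range n, (a (p+t) - a (p+t+1)) = a p - a q := by
    have := Finset.sum_range_sub' (fun t => a (p + t)) n
    simp only [add_zero] at this
    rw [← hpq]
    convert this using 2
    simp only [add_assoc]
  set R := a p - a q with hR
  have hterm_lo : ∀ t ∈ Finset.range n, g ≤ a (p+t) - a (p+t+1) := by
    intro t ht
    rw [Finset.mem_range] at ht
    exact d_antitone hdec (by omega : p + t ≤ q)
  have hterm_hi : ∀ t ∈ Finset.range n, a (p+t) - a (p+t+1) ≤ C * g := by
    intro t ht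
    exact le_trans (d_antitone hdec (by omega : p ≤ p + t)) hpig'
  have hRlow : (n:ℝ) * g ≤ R := by
    rw [← hsum]
    calc (n:ℝ) * g = ∑ _t ∈ Finset.range n, g := by
          rw [Finset.sum_const, Finset.card_range, nsmul_eq_mul]
      _ ≤ _ := Finset.sum_le_sum hterm_lo
  have hRhigh : R ≤ (n:ℝ) * (C * g) := by
    rw [← hsum]
    calc ∑ t ∈ Finset.range n, (a (p+t) - a (p+t+1)) ≤ ∑ _t ∈ Finset.range n, C*g :=
          Finset.sum_le_sum hterm_hi
      _ = (n:ℝ) * (C*g) := by rw [Finset.sum_const, Finset.card_range, nsmul_eq_mul]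
  have hRpos : 0 < R := lt_of_lt_of_le (by positivity : (0:ℝ) < n * g) hRlow
  -- the separated set
  set r' := g/3 with hr'
  have hr'pos : 0 < r' := by rw [hr']; exact div_pos hgpos (by norm_num)
  set T := (Finset.range (n+1)).image (fun t => a (p+t)) with hT
  have hTcard : T.card = n+1 := by
    rw [hT, Finset.card_image_of_injOn, Finset.card_range]
    intro t _ t' _ h
    have := (a_strictAnti hpos).injective h
    omega
  have hdiff : ∀ t t', t < t' → t' ≤ n → g ≤ a (p+t) - a (p+t') := by
    intro t t' htt' ht'
    have h1 : a (p+t) ≥ a (p+t'-1) := (a_strictAnti hpos).antitone (by omega)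
    have h2 : g ≤ a (p+t'-1) - a (p+t'-1+1) := d_antitone hdec (by omega : p + t' - 1 ≤ q)
    have h3 : p+t'-1+1 = p+t' := by omega
    rw [h3] at h2
    linarith
  clear_value g R r' n p q
  have hsep : ∀ y ∈ T, ∀ z ∈ T, y ≠ z → 2*r' < dist y z := by
    intro y hy z hz hyz
    rw [hT, Finset.mem_image] at hy hz
    obtain ⟨t, ht, rfl⟩ := hy
    obtain ⟨t', ht', rfl⟩ := hz
    rw [Finset.mem_range] at ht ht'
    rcases lt_trichotomy t t' with h | h | h
    · have hgt := hdiff t t' h (by omega)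
      rw [Real.dist_eq, abs_of_nonneg (by linarith [hgt, hgpos])]
      rw [hr']; linarith [hgt, hgpos]
    · exact absurd (by rw [h]) hyz
    · have hgt := hdiff t' t h (by omega)
      rw [Real.dist_eq, abs_of_nonpos (by linarith [hgt, hgpos]), neg_sub]
      rw [hr']; linarith [hgt, hgpos]
  have hTsub : ↑T ⊆ E ∩ closedBall (a q) R := by
    intro y hy
    rw [Finset.coe_image] at hy
    obtain ⟨t, ht, rfl⟩ := hy
    simp only [Finset.coe_range, mem_Iio] at ht
    refine ⟨Set.mem_range_self _, ?_⟩
    rw [mem_closedBall, Real.dist_eq]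
    have h1 : a (p+t) ≤ a p := (a_strictAnti hpos).antitone (by omega)
    have h2 : a q ≤ a (p+t) := (a_strictAnti hpos).antitone (by omega)
    rw [abs_of_nonneg (by linarith)]
    rw [hR]; linarith
  have hne : (coverSet (E ∩ closedBall (a q) R) r').Nonempty := by
    refine coverSet_nonempty_of_subset_Icc hr'pos (u := a q - R) (v := a q + R) ?_
    rw [Real.closedBall_eq_Icc]
    exact inter_subset_right
  have hcount : n+1 ≤ coverNum (E ∩ closedBall (a q) R) r' := by
    rw [← hTcard]
    exact card_le_coverNum T hTsub hsep hne
  have hloc : ((n:ℝ)+1) ≤ (coverNumLoc E r' R : ℝ) := by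
    have h1 := le_coverNumLoc (E := E) (x := a q) (Set.mem_range_self q) hr'pos hRpos.le
    have h2 : n+1 ≤ coverNumLoc E r' R := le_trans hcount h1
    exact_mod_cast h2
  -- conditions
  have hnx : x^(ε/4) ≤ (n:ℝ) := by
    have h1 : (I:ℝ) + 3 ≤ 4 * (I₁:ℝ) := by
      have : I + 3 ≤ 4 * I₁ := by omega
      exact_mod_cast this
    have h2 : x^(ε/4) = (x^ε)^((1:ℝ)/4) := by
      rw [← Real.rpow_mul (by positivity)]; ring_nf
    have h3 : (x^ε)^((1:ℝ)/4) ≤ ((2:ℝ)^((I:ℝ)+3))^((1:ℝ)/4) :=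
      Real.rpow_le_rpow (by positivity) hxI (by norm_num)
    have h4 : ((2:ℝ)^((I:ℝ)+3))^((1:ℝ)/4) = (2:ℝ)^(((I:ℝ)+3)/4) := by
      rw [← Real.rpow_mul (by norm_num), mul_one_div]
    have h5 : (2:ℝ)^(((I:ℝ)+3)/4) ≤ (2:ℝ)^((I₁:ℝ)) :=
      Real.rpow_le_rpow_of_exponent_le one_le_two (by linarith)
    have h6 : (2:ℝ)^((I₁:ℝ)) ≤ (n:ℝ) := by
      rw [Real.rpow_natCast]
      have : (2:ℕ)^I₁ ≤ n := by rw [hn]; exact Nat.pow_le_pow_right (by norm_num) hi1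
      exact_mod_cast this
    rw [h2]
    rw [h4] at h3
    linarith
  have hn0 : (0:ℝ) < n := by exact_mod_cast hn1
  have hδ : (0:ℝ) < ε/4 := by linarith
  have hcond1 : r' ≤ R ^ (1 + ε/4) := by
    have h1 : ((n:ℝ)*g) ^ (1+ε/4) ≤ R ^ (1+ε/4) :=
      Real.rpow_le_rpow (by positivity) hRlow (by linarith)
    have h2 : ((n:ℝ)*g) ^ (1+ε/4) = (n:ℝ)^(1+ε/4 : ℝ) * g^(1+ε/4 : ℝ) :=
      Real.mul_rpow (by positivity) hgpos.le
    have h3 : (n:ℝ) ≤ (n:ℝ)^(1+ε/4 : ℝ) := by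
      calc (n:ℝ) = (n:ℝ)^(1:ℝ) := (Real.rpow_one _).symm
        _ ≤ _ := Real.rpow_le_rpow_of_exponent_le (by exact_mod_cast hn1) (by linarith)
    have h4 : g^(1+ε/4 : ℝ) = g * g^(ε/4 : ℝ) := by
      rw [Real.rpow_add hgpos, Real.rpow_one]
    have h5 : r^(ε/4:ℝ) ≤ g^(ε/4 : ℝ) := Real.rpow_le_rpow hr.le hgr.le (by linarith)
    have h6 : (1:ℝ) ≤ (n:ℝ) * g^(ε/4:ℝ) := by
      calc (1:ℝ) = 1^(ε/4:ℝ) := (Real.one_rpow _).symm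
        _ = (x*r)^(ε/4:ℝ) := by rw [hxr]
        _ = x^(ε/4:ℝ) * r^(ε/4:ℝ) := Real.mul_rpow (by positivity) hr.le
        _ ≤ (n:ℝ) * g^(ε/4:ℝ) := by
            apply mul_le_mul hnx h5 (by positivity) (by positivity)
    have h7 : g ≤ (n:ℝ)^(1+ε/4 : ℝ) * g^(1+ε/4 : ℝ) := by
      rw [h4]
      calc g = 1 * g := (one_mul g).symm
        _ ≤ ((n:ℝ) * g^(ε/4:ℝ)) * g := by
            apply mul_le_mul_of_nonneg_right h6 hgpos.le
        _ = (n:ℝ) * (g * g^(ε/4:ℝ)) := by ring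
        _ ≤ (n:ℝ)^(1+ε/4 : ℝ) * (g * g^(ε/4:ℝ)) := by
            apply mul_le_mul_of_nonneg_right h3 (by positivity)
    rw [hr']
    calc g/3 ≤ g := by linarith
      _ ≤ ((n:ℝ)*g) ^ (1+ε/4) := by rw [h2]; linarith
      _ ≤ R ^ (1+ε/4) := h1
  have hR1 : R ≤ 1 := by
    have h1 := (hmem p).2
    have h2 := (hmem q).1
    rw [hR]; linarith
  have hcond2 : R ^ (1 + ε/4) ≤ R := by
    calc R ^ (1+ε/4) ≤ R ^ (1:ℝ) :=
          Real.rpow_le_rpow_of_exponent_ge hRpos hR1 (by linarith)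
      _ = R := Real.rpow_one R
  have hcond3 : R ≤ b := by
    have hnJ : J + 1 ≤ n := by
      have : ((J:ℝ)+1) ≤ (n:ℝ) := le_trans hA1 hnx
      exact_mod_cast this
    have hpJ : J ≤ p := by omega
    have h1 := hJ p hpJ
    have h2 : L ≤ a q := iInf_le_a hmem q
    rw [hR]; linarith
  have hPP := hP r' R hr'pos hcond1 hcond2 hcond3
  -- violation
  have hRr' : R / r' ≤ 3 * C * (n:ℝ) := by
    rw [hr', div_le_iff₀ (by linarith : (0:ℝ) < g/3)]
    calc R ≤ (n:ℝ)*(C*g) := hRhigh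
      _ = 3*C*(n:ℝ)*(g/3) := by ring
  have hfrac_nonneg : 0 ≤ R / r' := by positivity
  have h3Cn : (R/r')^α ≤ (3*C*(n:ℝ))^α := Real.rpow_le_rpow hfrac_nonneg hRr' hα0
  have hmulr : ((3*C*(n:ℝ)):ℝ)^α = (3*C)^α * (n:ℝ)^α := by
    rw [show (3*C*(n:ℝ)) = (3*C)*(n:ℝ) by ring, Real.mul_rpow (by positivity) hn0.le]
  have hn1α : x^(ε*(1-α)/4) ≤ (n:ℝ)^(1-α) := by
    have h := Real.rpow_le_rpow (by positivity) hnx (by linarith : (0:ℝ) ≤ 1-α)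
    rwa [← Real.rpow_mul (by positivity), show ε/4*(1-α) = ε*(1-α)/4 by ring] at h
  have hsplit : (n:ℝ)^((1:ℝ)-α) * (n:ℝ)^α = (n:ℝ) := by
    rw [← Real.rpow_add hn0, sub_add_cancel, Real.rpow_one]
  have hnαpos : 0 < (n:ℝ)^α := Real.rpow_pos_of_pos hn0 α
  have hkey : c * ((3*C)^α * (n:ℝ)^α) < (n:ℝ) := by
    have h1 : c * (3*C)^α < (n:ℝ)^((1:ℝ)-α) := by
      have h2 := le_trans hA2 hn1α
      linarith
    have h3 : c*(3*C)^α * (n:ℝ)^α < (n:ℝ)^((1:ℝ)-α) * (n:ℝ)^α :=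
      mul_lt_mul_of_pos_right h1 hnαpos
    rw [hsplit] at h3
    calc c * ((3*C)^α * (n:ℝ)^α) = c*(3*C)^α * (n:ℝ)^α := by ring
      _ < (n:ℝ) := h3
  have hfin : c * (R/r')^α < (n:ℝ) := by
    calc c * (R/r')^α ≤ c * ((3*C*(n:ℝ))^α) := by
          exact mul_le_mul_of_nonneg_left h3Cn hc.le
      _ = c * ((3*C)^α * (n:ℝ)^α) := by rw [hmulr]
      _ < (n:ℝ) := hkey
  linarith

lemma hUpper_eq_one_hard {a : ℕ → ℝ} (hmem : ∀ j, a j ∈ Set.Icc (0:ℝ) 1)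
    (hpos : ∀ j, 0 < a j - a (j+1))
    (hdec : ∀ j, a (j+1) - a (j+2) ≤ a j - a (j+1))
    {ε : ℝ} (hε : 0 < ε) (hε2 : ε ≤ 1/2)
    (hfreq : ∀ r₀ : ℝ, 0 < r₀ →
      ∃ r, 0 < r ∧ r < r₀ ∧ r < 1 ∧ (1/r) ^ ε ≤ (coverNum (Set.range a) r : ℝ)) :
    hUpper (Set.range a) (ε/4) = 1 := by
  refine le_antisymm (hUpper_le_one _ _) ?_
  rw [hUpper_eq]
  refine le_csInf ⟨1, one_mem_hSet _ _⟩ ?_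
  rintro α ⟨hα0, b, c, hb, hc, hP⟩
  by_contra hα1
  push_neg at hα1
  set L := ⨅ i, a i with hL
  -- convergence threshold J
  have hJex : ∃ J : ℕ, ∀ j, J ≤ j → a j - L ≤ b := by
    have h1 : ∀ᶠ j in atTop, a j < L + b :=
      (a_tendsto hmem hpos).eventually (gt_mem_nhds (by linarith : L < L + b))
    rw [eventually_atTop] at h1
    obtain ⟨J, hJ⟩ := h1
    exact ⟨J, fun j hj => by linarith [hJ j hj]⟩
  obtain ⟨J, hJ⟩ := hJex
  -- thresholds
  obtain ⟨t1, ht1pos, ht1⟩ := rpow_threshold hε (by norm_num : (0:ℝ) < 128)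
  obtain ⟨t2, ht2pos, ht2⟩ := rpow_threshold (by linarith : (0:ℝ) < ε/2) (by norm_num : (0:ℝ) < 2)
  obtain ⟨t3, ht3pos, ht3⟩ := rpow_threshold
    (by nlinarith : (0:ℝ) < ε*(1-α)/2) (by linarith : (0:ℝ) < 4*c+1)
  obtain ⟨t4, ht4pos, ht4⟩ := rpow_threshold (by linarith : (0:ℝ) < ε/4)
    (by positivity : (0:ℝ) < (J:ℝ)+1)
  obtain ⟨t5, ht5pos, ht5⟩ := rpow_threshold (by nlinarith : (0:ℝ) < ε*(1-α)/4)
    (by positivity : (0:ℝ) < c * (3 * (2:ℝ)^((4:ℝ)/ε)) ^ α + 1)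
  set r₀ := min (min (min t1 t2) (min t3 t4)) (min t5 (min (b^2) (1/2))) with hr₀
  have hr₀pos : 0 < r₀ := by
    refine lt_min (lt_min (lt_min ht1pos ht2pos) (lt_min ht3pos ht4pos)) ?_
    exact lt_min ht5pos (lt_min (by positivity) (by norm_num))
  obtain ⟨r, hr, hrr₀, hr1, hN⟩ := hfreq r₀ hr₀pos
  have hrt1 : r ≤ t1 := le_of_lt (lt_of_lt_of_le hrr₀ (by
    calc r₀ ≤ min (min t1 t2) (min t3 t4) := min_le_left _ _
      _ ≤ min t1 t2 := min_le_left _ _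
      _ ≤ t1 := min_le_left _ _))
  have hrt2 : r ≤ t2 := le_of_lt (lt_of_lt_of_le hrr₀ (by
    calc r₀ ≤ min (min t1 t2) (min t3 t4) := min_le_left _ _
      _ ≤ min t1 t2 := min_le_left _ _
      _ ≤ t2 := min_le_right _ _))
  have hrt3 : r ≤ t3 := le_of_lt (lt_of_lt_of_le hrr₀ (by
    calc r₀ ≤ min (min t1 t2) (min t3 t4) := min_le_left _ _
      _ ≤ min t3 t4 := min_le_right _ _
      _ ≤ t3 := min_le_left _ _))
  have hrt4 : r ≤ t4 := le_of_lt (lt_of_lt_of_le hrr₀ (by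
    calc r₀ ≤ min (min t1 t2) (min t3 t4) := min_le_left _ _
      _ ≤ min t3 t4 := min_le_right _ _
      _ ≤ t4 := min_le_right _ _))
  have hrt5 : r ≤ t5 := le_of_lt (lt_of_lt_of_le hrr₀ (by
    calc r₀ ≤ min t5 (min (b^2) (1/2)) := min_le_right _ _
      _ ≤ t5 := min_le_left _ _))
  have hrb2 : r ≤ b^2 := le_of_lt (lt_of_lt_of_le hrr₀ (by
    calc r₀ ≤ min t5 (min (b^2) (1/2)) := min_le_right _ _
      _ ≤ min (b^2) (1/2) := min_le_right _ _
      _ ≤ b^2 := min_le_left _ _))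
  have hr2 : r ≤ 1/2 := le_of_lt (lt_of_lt_of_le hrr₀ (by
    calc r₀ ≤ min t5 (min (b^2) (1/2)) := min_le_right _ _
      _ ≤ min (b^2) (1/2) := min_le_right _ _
      _ ≤ 1/2 := min_le_right _ _))
  have hC1 : (128:ℝ) ≤ (1/r)^ε := ht1 r hr hrt1
  set m := mIdx a r with hm
  obtain ⟨hgap, htail⟩ := mIdx_spec hmem hdec hr
  have hNle := coverNum_E_le hmem hpos hdec hr
  rw [← hm, ← hL] at hNle
  by_cases hcase : (1/r)^ε / 4 ≤ (m:ℝ)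
  · exact caseA hmem hpos hdec hgap hr hr2 hε hε2 hα0 hα1 hb hc hcase hC1 hJ
      (ht4 r hr hrt4) (ht5 r hr hrt5) hP
  · push_neg at hcase
    have hℓ : r * (1/r)^ε / 2 ≤ a m - L := by
      have h1 : (1/r)^ε ≤ (m:ℝ) + (a m - L)/(2*r) + 2 := le_trans hN hNle
      have h2 : (1/r)^ε/2 ≤ (a m - L)/(2*r) := by
        have : (1/r)^ε - 2 - (1/r)^ε/4 ≤ (a m - L)/(2*r) := by linarith
        linarith
      rw [le_div_iff₀ (by positivity : (0:ℝ) < 2*r)] at h2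
      have hPnn : (0:ℝ) ≤ (1/r)^ε := by positivity
      nlinarith
    exact caseB hmem hpos htail hr hr2 hε hε2 hα0 hα1 hb hc hℓ
      (ht2 r hr hrt2) hrb2 (ht3 r hr hrt3) hP


/-- For a sequence in `[0,1]` with positive nonincreasing gaps, the quasi-Assouad dimension
of its range is `1` when the upper box dimension is positive, and `0` otherwise. -/
theorem qADim_decreasing_gaps_dichotomy
    (a : ℕ → ℝ) (hmem : ∀ j, a j ∈ Set.Icc (0:ℝ) 1)
    (hpos : ∀ j, 0 < a j - a (j+1))
    (hdec : ∀ j, a (j+1) - a (j+2) ≤ a j - a (j+1))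
    (E : Set ℝ) (hE : E = Set.range a) :
    (0 < upperBoxDim E → qADim E = 1) ∧ (upperBoxDim E = 0 → qADim E = 0) := by
  have hEsub : E ⊆ Icc (0:ℝ) 1 := by rw [hE]; rintro _ ⟨j, rfl⟩; exact hmem j
  have hEne : E.Nonempty := by rw [hE]; exact ⟨a 0, 0, rfl⟩
  have hbdd : BddAbove (hUpper E '' Ioo (0:ℝ) 1) := by
    refine ⟨1, ?_⟩
    rintro y ⟨δ', hδ', rfl⟩
    exact hUpper_le_one _ _
  constructor
  · intro hbox
    obtain ⟨ε, hε1, hε2, hfreq⟩ := freq_coverNum hEsub hbox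
    rw [hE] at hfreq
    have h1 : hUpper E (ε/4) = 1 := by
      rw [hE]
      exact hUpper_eq_one_hard hmem hpos hdec hε1 hε2 hfreq
    have hδ : ε/4 ∈ Ioo (0:ℝ) 1 := ⟨by linarith, by linarith⟩
    show sSup (hUpper E '' Ioo (0:ℝ) 1) = 1
    refine le_antisymm ?_ ?_
    · refine csSup_le ⟨hUpper E (ε/4), mem_image_of_mem _ hδ⟩ ?_
      rintro y ⟨δ', hδ', rfl⟩
      exact hUpper_le_one _ _
    · calc (1:ℝ) = hUpper E (ε/4) := h1.symm
        _ ≤ _ := le_csSup hbdd (mem_image_of_mem _ hδ)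
  · intro hbox
    have hz : ∀ δ, δ ∈ Ioo (0:ℝ) 1 → hUpper E δ = 0 := fun δ hδ =>
      hUpper_zero_of_boxDim_zero hEsub hEne hbox hδ
    show sSup (hUpper E '' Ioo (0:ℝ) 1) = 0
    refine le_antisymm ?_ ?_
    · refine csSup_le ⟨hUpper E (1/2), mem_image_of_mem _ (by norm_num)⟩ ?_
      rintro y ⟨δ', hδ', rfl⟩
      exact le_of_eq (hz δ' hδ')
    · have h0 : (0:ℝ) ∈ hUpper E '' Ioo (0:ℝ) 1 :=
        ⟨1/2, by norm_num, hz (1/2) (by norm_num)⟩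
      exact le_csSup hbdd h0
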